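/- If the set {(A*y, ⟨b, y⟩) : y ∈ K*} ⊆ X × ℝ is closed, then the conic system P = {x : Ax ≤_K b} is well-behaved. -/

import Mathlib

open scoped RealInnerProductSpace

noncomputable section

/-- The dual cone of a set `K` in a real inner product space. -/
def dualConeSet {Y : Type*} [NormedAddCommGroup Y] [InnerProductSpace ℝ Y] (K : Set Y) : Set Y :=
  {y | ∀ x ∈ K, 0 ≤ ⟪y, x⟫}

/-- The conic system `P = {x | Ax ≤_K b}` is well-behaved: for every objective `c` for which
the value of `sup {⟪c, x⟫ | b - A x ∈ K}` is finite (i.e. the set of objective values has a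
least upper bound `v`), there is `y ∈ K*` with `A* y = c` and `⟪b, y⟫ = v`. -/
def WellBehavedSystem {X Y : Type*}
    [NormedAddCommGroup X] [InnerProductSpace ℝ X] [FiniteDimensional ℝ X]
    [NormedAddCommGroup Y] [InnerProductSpace ℝ Y] [FiniteDimensional ℝ Y]
    (A : X →ₗ[ℝ] Y) (b : Y) (K : Set Y) : Prop :=
  ∀ (c : X) (v : ℝ), IsLUB {r : ℝ | ∃ x : X, b - A x ∈ K ∧ r = ⟪c, x⟫} v →
    ∃ y ∈ dualConeSet K, LinearMap.adjoint A y = c ∧ ⟪b, y⟫ = v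

/-- Bipolar-type helper: if `z` has nonnegative inner product with every element of the dual
cone of a nonempty closed convex cone `K`, then `z ∈ K`. -/
lemma mem_of_inner_dual_nonneg {Y : Type*}
    [NormedAddCommGroup Y] [InnerProductSpace ℝ Y] [FiniteDimensional ℝ Y]
    {K : Set Y} (hKclosed : IsClosed K) (hKconv : Convex ℝ K)
    (hKcone : ∀ (t : ℝ), 0 ≤ t → ∀ x ∈ K, t • x ∈ K) (hne : K.Nonempty)
    {z : Y} (hz : ∀ y ∈ dualConeSet K, 0 ≤ ⟪z, y⟫) : z ∈ K := by
  have hKadd : ∀ u ∈ K, ∀ w ∈ K, u + w ∈ K := by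
    intro u hu w hw
    have h1 : (1/2 : ℝ) • u + (1/2 : ℝ) • w ∈ K :=
      hKconv hu hw (by norm_num) (by norm_num) (by norm_num)
    have h2 := hKcone 2 (by norm_num) _ h1
    have h3 : (2:ℝ) • ((1/2 : ℝ) • u + (1/2 : ℝ) • w) = u + w := by
      rw [smul_add, smul_smul, smul_smul]; norm_num
    rwa [h3] at h2
  let KC : ConvexCone ℝ Y :=
    { carrier := K
      smul_mem' := fun t ht x hx => hKcone t ht.le x hx
      add_mem' := fun u hu w hw => hKadd u hu w hw }
  by_contra h
  obtain ⟨y, hy1, hy2⟩ :=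
    (show ProperCone ℝ Y from
      { carrier := K
        add_mem' := fun {u w} hu hw => hKadd u hu w hw
        zero_mem' := by
          obtain ⟨k, hk⟩ := hne
          simpa using hKcone 0 le_rfl k hk
        smul_mem' := fun t x hx => hKcone t t.2 x hx
        isClosed' := hKclosed }).hyperplane_separation' h
  have hyd : y ∈ dualConeSet K := by
    intro x hx
    rw [real_inner_comm]
    exact hy1 x hx
  have := hz y hyd
  linarith

theorem wellBehaved_of_closed
    {X Y : Type*}
    [NormedAddCommGroup X] [InnerProductSpace ℝ X] [FiniteDimensional ℝ X]
    [NormedAddCommGroup Y] [InnerProductSpace ℝ Y] [FiniteDimensional ℝ Y]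
    (A : X →ₗ[ℝ] Y) (b : Y) (K : Set Y)
    (hKclosed : IsClosed K) (hKconv : Convex ℝ K)
    (hKcone : ∀ (t : ℝ), 0 ≤ t → ∀ x ∈ K, t • x ∈ K)
    (hP : ∃ x : X, b - A x ∈ K)
    (hclosed : IsClosed {p : X × ℝ | ∃ y ∈ dualConeSet K,
      p = (LinearMap.adjoint A y, ⟪b, y⟫)}) :
    WellBehavedSystem A b K := by
  intro c v hv
  obtain ⟨x₀, hx₀⟩ := hP
  have hKne : K.Nonempty := ⟨_, hx₀⟩
  have hKadd : ∀ u ∈ K, ∀ w ∈ K, u + w ∈ K := by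
    intro u hu w hw
    have h1 : (1/2 : ℝ) • u + (1/2 : ℝ) • w ∈ K :=
      hKconv hu hw (by norm_num) (by norm_num) (by norm_num)
    have h2 := hKcone 2 (by norm_num) _ h1
    have h3 : (2:ℝ) • ((1/2 : ℝ) • u + (1/2 : ℝ) • w) = u + w := by
      rw [smul_add, smul_smul, smul_smul]; norm_num
    rwa [h3] at h2
  have h0dual : (0:Y) ∈ dualConeSet K := by
    intro x hx; simp [inner_zero_left]
  -- the extended dual image set
  set D' : Set (X × ℝ) :=
    {p | ∃ y ∈ dualConeSet K, LinearMap.adjoint A y = p.1 ∧ ⟪b, y⟫ ≤ p.2} with hD'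
  have hdual_smul : ∀ (t : ℝ), 0 ≤ t → ∀ y ∈ dualConeSet K, t • y ∈ dualConeSet K := by
    intro t ht y hy x hx
    rw [real_inner_smul_left]
    exact mul_nonneg ht (hy x hx)
  have hdual_add : ∀ y₁ ∈ dualConeSet K, ∀ y₂ ∈ dualConeSet K, y₁ + y₂ ∈ dualConeSet K := by
    intro y₁ h₁ y₂ h₂ x hx
    rw [inner_add_left]
    exact add_nonneg (h₁ x hx) (h₂ x hx)
  have hD'smul : ∀ (t : ℝ), 0 ≤ t → ∀ p ∈ D', t • p ∈ D' := by
    rintro t ht p ⟨y, hy, h1, h2⟩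
    refine ⟨t • y, hdual_smul t ht y hy, ?_, ?_⟩
    · simp [map_smul, h1, Prod.smul_fst]
    · rw [real_inner_smul_right]
      calc t * ⟪b, y⟫ ≤ t * p.2 := mul_le_mul_of_nonneg_left h2 ht
        _ = (t • p).2 := rfl
  have hD'conv : Convex ℝ D' := by
    rintro p ⟨y₁, hy₁, hp1, hp2⟩ q ⟨y₂, hy₂, hq1, hq2⟩ a b' ha hb' hab
    refine ⟨a • y₁ + b' • y₂,
      hdual_add _ (hdual_smul a ha _ hy₁) _ (hdual_smul b' hb' _ hy₂), ?_, ?_⟩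
    · simp [map_add, map_smul, hp1, hq1]
    · rw [inner_add_right, real_inner_smul_right, real_inner_smul_right]
      have := add_le_add (mul_le_mul_of_nonneg_left hp2 ha) (mul_le_mul_of_nonneg_left hq2 hb')
      simpa using this
  have h0D' : ((0 : X), (0 : ℝ)) ∈ D' := ⟨0, h0dual, by simp, by simp⟩
  -- weak duality
  have hweak : ∀ y ∈ dualConeSet K, ∀ x : X, b - A x ∈ K →
      ⟪LinearMap.adjoint A y, x⟫ ≤ ⟪b, y⟫ := by
    intro y hy x hx
    have h1 : 0 ≤ ⟪y, b - A x⟫ := hy _ hx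
    rw [inner_sub_right] at h1
    rw [LinearMap.adjoint_inner_left]
    linarith [real_inner_comm b y]
  -- Step A: (c, v) ∈ closure D'
  have hA : (c, v) ∈ closure D' := by
    by_contra hcv
    obtain ⟨f, u, hfu, huf⟩ :=
      geometric_hahn_banach_closed_point hD'conv.closure isClosed_closure hcv
    have hu0 : 0 < u := by
      have h00 := hfu 0 (subset_closure h0D')
      simpa using h00
    have hfle : ∀ p ∈ D', f p ≤ 0 := by
      intro p hp
      by_contra hfp
      push_neg at hfp
      have hs : (u / f p) • p ∈ D' := hD'smul _ (le_of_lt (div_pos hu0 hfp)) p hp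
      have := hfu _ (subset_closure hs)
      rw [map_smul] at this
      simp only [smul_eq_mul] at this
      rw [div_mul_cancel₀ _ (ne_of_gt hfp)] at this
      exact lt_irrefl u this
    -- decompose f
    set t : ℝ := f ((0 : X), (1 : ℝ)) with htdef
    set g : X →L[ℝ] ℝ := f.comp (ContinuousLinearMap.inl ℝ X ℝ) with hgdef
    set xb : X := (InnerProductSpace.toDual ℝ X).symm g with hxbdef
    have hrep : ∀ p : X × ℝ, f p = ⟪xb, p.1⟫ + t * p.2 := by
      intro p
      have hps : p = ((p.1, 0) : X × ℝ) + p.2 • ((0 : X), (1 : ℝ)) := by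
        simp [Prod.ext_iff]
      have h1 : f p = f (p.1, 0) + p.2 * f ((0 : X), (1 : ℝ)) := by
        conv_lhs => rw [hps]
        rw [map_add, map_smul, smul_eq_mul]
      have hg : ⟪xb, p.1⟫ = g p.1 := InnerProductSpace.toDual_symm_apply
      have hgf : g p.1 = f (p.1, 0) := rfl
      rw [h1, ← htdef, hg, hgf]
      ring
    have ht0 : t ≤ 0 := by
      have := hfle ((0 : X), (1 : ℝ)) ⟨0, h0dual, by simp, by simp⟩
      simpa [htdef] using this
    have hkey : ∀ y ∈ dualConeSet K, ⟪A xb + t • b, y⟫ ≤ 0 := by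
      intro y hy
      have := hfle (LinearMap.adjoint A y, ⟪b, y⟫) ⟨y, hy, rfl, le_refl _⟩
      rw [hrep] at this
      simp only at this
      have hax : ⟪xb, LinearMap.adjoint A y⟫ = ⟪A xb, y⟫ := by
        rw [real_inner_comm, LinearMap.adjoint_inner_left, real_inner_comm]
      rw [inner_add_left, real_inner_smul_left]
      rw [hax] at this
      linarith
    have hwK : -(A xb + t • b) ∈ K := by
      apply mem_of_inner_dual_nonneg hKclosed hKconv hKcone hKne
      intro y hy
      rw [inner_neg_left]
      linarith [hkey y hy]
    have hcv2 : 0 < ⟪xb, c⟫ + t * v := by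
      have := hrep (c, v)
      simp only at this
      linarith [huf, hu0, this ▸ huf]
    rcases lt_or_eq_of_le ht0 with ht | ht
    · -- t < 0 : (-t)⁻¹ • xb is feasible with value > v
      set u' : X := (-t)⁻¹ • xb with hu'def
      have htpos : 0 < -t := neg_pos.2 ht
      have hfeas : b - A u' ∈ K := by
        have hne' : t ≠ 0 := ne_of_lt ht
        have heq : b - A u' = (-t)⁻¹ • (-(A xb + t • b)) := by
          rw [hu'def, map_smul]
          match_scalars <;> field_simp
        rw [heq]
        exact hKcone _ (le_of_lt (inv_pos.2 htpos)) _ hwK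
      have hle : ⟪c, u'⟫ ≤ v := hv.1 ⟨u', hfeas, rfl⟩
      have hq : ⟪c, u'⟫ = (-t)⁻¹ * ⟪c, xb⟫ := by
        rw [hu'def, real_inner_smul_right]
      have h4 : (-t) * ⟪c, u'⟫ ≤ (-t) * v := mul_le_mul_of_nonneg_left hle (le_of_lt htpos)
      have h5 : (-t) * ⟪c, u'⟫ = ⟪c, xb⟫ := by
        rw [hq]; field_simp [ne_of_lt ht]
      rw [real_inner_comm c xb] at hcv2
      nlinarith
    · -- t = 0
      rw [ht] at hcv2
      simp only [zero_mul, add_zero] at hcv2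
      rw [real_inner_comm c xb] at hcv2
      have hwK' : -(A xb) ∈ K := by
        have : -(A xb + t • b) = -(A xb) := by rw [ht]; simp
        rwa [this] at hwK
      have hub0 : ⟪c, x₀⟫ ≤ v := hv.1 ⟨x₀, hx₀, rfl⟩
      set s : ℝ := (v - ⟪c, x₀⟫ + 1) / ⟪c, xb⟫ with hsdef
      have hs0 : 0 ≤ s := div_nonneg (by linarith) (le_of_lt hcv2)
      have hfeas : b - A (x₀ + s • xb) ∈ K := by
        have heq : b - A (x₀ + s • xb) = (b - A x₀) + s • (-(A xb)) := by
          rw [map_add, map_smul, smul_neg]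
          abel
        rw [heq]
        exact hKadd _ hx₀ _ (hKcone s hs0 _ hwK')
      have hle : ⟪c, x₀ + s • xb⟫ ≤ v := hv.1 ⟨_, hfeas, rfl⟩
      rw [inner_add_right, real_inner_smul_right] at hle
      have hsval : s * ⟪c, xb⟫ = v - ⟪c, x₀⟫ + 1 := by
        rw [hsdef]; field_simp
      linarith
  -- Step B: extract a convergent subsequence landing in the closed set
  obtain ⟨sq, hsq_mem, hsq_lim⟩ := mem_closure_iff_seq_limit.1 hA
  choose ys hys hys1 hys2 using hsq_mem
  have lim1 : Filter.Tendsto (fun n => (sq n).1) Filter.atTop (nhds c) :=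
    (continuous_fst.tendsto _).comp hsq_lim
  have lim2 : Filter.Tendsto (fun n => (sq n).2) Filter.atTop (nhds v) :=
    (continuous_snd.tendsto _).comp hsq_lim
  have hlow : ∀ n, ⟪(sq n).1, x₀⟫ ≤ ⟪b, ys n⟫ := by
    intro n
    rw [← hys1 n]
    exact hweak _ (hys n) x₀ hx₀
  have lim3 : Filter.Tendsto (fun n => ⟪(sq n).1, x₀⟫) Filter.atTop (nhds ⟪c, x₀⟫) :=
    lim1.inner tendsto_const_nhds
  obtain ⟨M, hM⟩ : BddAbove (Set.range fun n => (sq n).2) := lim2.bddAbove_range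
  obtain ⟨m, hm⟩ : BddBelow (Set.range fun n => ⟪(sq n).1, x₀⟫) := lim3.bddBelow_range
  have hmem : ∀ n, ⟪b, ys n⟫ ∈ Set.Icc m M := by
    intro n
    constructor
    · exact le_trans (hm ⟨n, rfl⟩) (hlow n)
    · exact le_trans (hys2 n) (hM ⟨n, rfl⟩)
  obtain ⟨r, _, φ, hφ, hglim⟩ := (isCompact_Icc (a := m) (b := M)).tendsto_subseq hmem
  have hpair : Filter.Tendsto
      (fun n => ((LinearMap.adjoint A (ys (φ n)), ⟪b, ys (φ n)⟫) : X × ℝ))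
      Filter.atTop (nhds (c, r)) := by
    have h1 : Filter.Tendsto (fun n => LinearMap.adjoint A (ys (φ n)))
        Filter.atTop (nhds c) := by
      have := lim1.comp hφ.tendsto_atTop
      simpa only [Function.comp_def, hys1] using this
    exact h1.prodMk_nhds hglim
  have hin : ((c, r) : X × ℝ) ∈ {p : X × ℝ | ∃ y ∈ dualConeSet K,
      p = (LinearMap.adjoint A y, ⟪b, y⟫)} := by
    apply hclosed.mem_of_tendsto hpair
    exact Filter.Eventually.of_forall fun n => ⟨ys (φ n), hys (φ n), rfl⟩
  obtain ⟨y, hy, hyeq⟩ := hin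
  have hc1 : LinearMap.adjoint A y = c := (Prod.ext_iff.1 hyeq).1.symm
  have hc2 : ⟪b, y⟫ = r := (Prod.ext_iff.1 hyeq).2.symm
  have hrv : r ≤ v := by
    have lim2' : Filter.Tendsto (fun n => (sq (φ n)).2) Filter.atTop (nhds v) :=
      lim2.comp hφ.tendsto_atTop
    exact le_of_tendsto_of_tendsto' hglim lim2' fun n => hys2 (φ n)
  have hvr : v ≤ ⟪b, y⟫ := by
    apply hv.2
    rintro _ ⟨x, hx, rfl⟩
    rw [← hc1]
    exact hweak y hy x hx
  exact ⟨y, hy, hc1, by linarith⟩
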